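/- Let k ≠ 0 be a real constant. Let u : ℝ² → ℝ be twice continuously differentiable and let φ₁, φ₂ : ℝ² → ℝ be differentiable, satisfying on ℝ² the ansatz relations ∂u/∂x₁ = φ₂ + k sin u and ∂u/∂x₂ = k⁻¹ sin(u − φ₁), with cos(u − φ₁) > 0 everywhere. If u satisfies ∂²u/∂x₂∂x₁ = √(1 − k² (∂u/∂x₂)²) · sin u on ℝ², then ∂φ₁/∂x₁ = φ₂ and ∂φ₂/∂x₂ = sin φ₁ on ℝ²; consequently, if additionally φ₁ is twice continuously differentiable, then φ₁ satisfies the sine-Gordon equation ∂²φ₁/∂x₂∂x₁ = sin φ₁. -/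

import Mathlib

open Real

private lemma partial1_hasDerivAt {F : Type*} [NormedAddCommGroup F] [NormedSpace ℝ F]
    {f : ℝ × ℝ → F} (hf : Differentiable ℝ f) (x₁ x₂ : ℝ) :
    HasDerivAt (fun s => f (s, x₂)) (fderiv ℝ f (x₁, x₂) (1, 0)) x₁ := by
  have hline : HasDerivAt (fun s : ℝ => (s, x₂)) ((1 : ℝ), (0 : ℝ)) x₁ :=
    (hasDerivAt_id x₁).prodMk (hasDerivAt_const x₁ x₂)
  exact (hf (x₁, x₂)).hasFDerivAt.comp_hasDerivAt x₁ hline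

private lemma partial2_hasDerivAt {F : Type*} [NormedAddCommGroup F] [NormedSpace ℝ F]
    {f : ℝ × ℝ → F} (hf : Differentiable ℝ f) (x₁ x₂ : ℝ) :
    HasDerivAt (fun t => f (x₁, t)) (fderiv ℝ f (x₁, x₂) (0, 1)) x₂ := by
  have hline : HasDerivAt (fun t : ℝ => (x₁, t)) ((0 : ℝ), (1 : ℝ)) x₂ :=
    (hasDerivAt_const x₂ x₁).prodMk (hasDerivAt_id x₂)
  exact (hf (x₁, x₂)).hasFDerivAt.comp_hasDerivAt x₂ hline

theorem reduction_to_sine_gordon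
    (k : ℝ) (hk : k ≠ 0) (u φ₁ φ₂ : ℝ × ℝ → ℝ)
    (hu : ContDiff ℝ 2 u)
    (hφ₁ : Differentiable ℝ φ₁) (hφ₂ : Differentiable ℝ φ₂)
    (ha1 : ∀ x₁ x₂ : ℝ,
      deriv (fun s => u (s, x₂)) x₁ = φ₂ (x₁, x₂) + k * Real.sin (u (x₁, x₂)))
    (ha2 : ∀ x₁ x₂ : ℝ,
      deriv (fun t => u (x₁, t)) x₂ = k⁻¹ * Real.sin (u (x₁, x₂) - φ₁ (x₁, x₂)))
    (hcos : ∀ x₁ x₂ : ℝ, 0 < Real.cos (u (x₁, x₂) - φ₁ (x₁, x₂)))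
    (heq : ∀ x₁ x₂ : ℝ,
      deriv (fun t => deriv (fun s => u (s, t)) x₁) x₂ =
        Real.sqrt (1 - k ^ 2 * (deriv (fun t => u (x₁, t)) x₂) ^ 2) *
          Real.sin (u (x₁, x₂))) :
    (∀ x₁ x₂ : ℝ, deriv (fun s => φ₁ (s, x₂)) x₁ = φ₂ (x₁, x₂)) ∧
    (∀ x₁ x₂ : ℝ, deriv (fun t => φ₂ (x₁, t)) x₂ = Real.sin (φ₁ (x₁, x₂))) ∧
    (ContDiff ℝ 2 φ₁ → ∀ x₁ x₂ : ℝ,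
      deriv (fun t => deriv (fun s => φ₁ (s, t)) x₁) x₂ = Real.sin (φ₁ (x₁, x₂))) := by
  have hud : Differentiable ℝ u := hu.differentiable (by norm_num)
  have hUc : ContDiff ℝ 1 (fderiv ℝ u) := by
    have : ContDiff ℝ ((1 : ℕ) + 1) u := by exact_mod_cast hu
    exact (contDiff_succ_iff_fderiv.mp this).2.2
  have hUd : Differentiable ℝ (fderiv ℝ u) := hUc.differentiable one_ne_zero
  -- the mixed second derivative (in both orders) equals V p (0,1) (1,0)
  have hsymm : ∀ x₁ x₂ : ℝ,
      fderiv ℝ (fderiv ℝ u) (x₁, x₂) (1, 0) (0, 1) =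
      fderiv ℝ (fderiv ℝ u) (x₁, x₂) (0, 1) (1, 0) :=
    fun x₁ x₂ => second_derivative_symmetric (fun y => (hud y).hasFDerivAt)
      ((hUd (x₁, x₂)).hasFDerivAt) _ _
  have h12 : ∀ x₁ x₂ : ℝ,
      deriv (fun t => deriv (fun s => u (s, t)) x₁) x₂ =
        fderiv ℝ (fderiv ℝ u) (x₁, x₂) (0, 1) (1, 0) := by
    intro x₁ x₂
    have hf : (fun t => deriv (fun s => u (s, t)) x₁) =
        fun t => fderiv ℝ u (x₁, t) (1, 0) :=
      funext fun t => (partial1_hasDerivAt hud x₁ t).deriv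
    rw [hf]
    have h := (partial2_hasDerivAt hUd x₁ x₂).clm_apply
      (hasDerivAt_const x₂ ((1 : ℝ), (0 : ℝ)))
    simpa using h.deriv
  have h21 : ∀ x₁ x₂ : ℝ,
      deriv (fun s => deriv (fun t => u (s, t)) x₂) x₁ =
        fderiv ℝ (fderiv ℝ u) (x₁, x₂) (0, 1) (1, 0) := by
    intro x₁ x₂
    have hf : (fun s => deriv (fun t => u (s, t)) x₂) =
        fun s => fderiv ℝ u (s, x₂) (0, 1) :=
      funext fun s => (partial2_hasDerivAt hud s x₂).deriv
    rw [hf, ← hsymm]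
    have h := (partial1_hasDerivAt hUd x₁ x₂).clm_apply
      (hasDerivAt_const x₁ ((0 : ℝ), (1 : ℝ)))
    simpa using h.deriv
  -- the mixed derivative equals cos(u-φ₁)·sin u
  have hmix : ∀ x₁ x₂ : ℝ,
      fderiv ℝ (fderiv ℝ u) (x₁, x₂) (0, 1) (1, 0) =
        Real.cos (u (x₁, x₂) - φ₁ (x₁, x₂)) * Real.sin (u (x₁, x₂)) := by
    intro x₁ x₂
    have h := heq x₁ x₂
    rw [h12 x₁ x₂, ha2 x₁ x₂] at h
    have h1 : 1 - k ^ 2 * (k⁻¹ * Real.sin (u (x₁, x₂) - φ₁ (x₁, x₂))) ^ 2 =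
        Real.cos (u (x₁, x₂) - φ₁ (x₁, x₂)) ^ 2 := by
      have := Real.sin_sq_add_cos_sq (u (x₁, x₂) - φ₁ (x₁, x₂))
      field_simp
      nlinarith [this]
    rw [h1, Real.sqrt_sq (hcos x₁ x₂).le] at h
    exact h
  -- first partials via fderiv
  have hu1 : ∀ x₁ x₂ : ℝ, fderiv ℝ u (x₁, x₂) (1, 0) =
      φ₂ (x₁, x₂) + k * Real.sin (u (x₁, x₂)) := by
    intro x₁ x₂
    rw [← (partial1_hasDerivAt hud x₁ x₂).deriv]; exact ha1 x₁ x₂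
  -- Part 1
  have part1 : ∀ x₁ x₂ : ℝ, deriv (fun s => φ₁ (s, x₂)) x₁ = φ₂ (x₁, x₂) := by
    intro x₁ x₂
    set d := u (x₁, x₂) - φ₁ (x₁, x₂) with hd
    have hfun : (fun s => deriv (fun t => u (s, t)) x₂) =
        fun s => k⁻¹ * Real.sin (u (s, x₂) - φ₁ (s, x₂)) :=
      funext fun s => ha2 s x₂
    have hder : HasDerivAt (fun s => k⁻¹ * Real.sin (u (s, x₂) - φ₁ (s, x₂)))
        (k⁻¹ * (Real.cos d *
          (fderiv ℝ u (x₁, x₂) (1, 0) - fderiv ℝ φ₁ (x₁, x₂) (1, 0)))) x₁ := by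
      have := (((partial1_hasDerivAt hud x₁ x₂).sub
        (partial1_hasDerivAt hφ₁ x₁ x₂)).sin).const_mul k⁻¹
      simpa [hd, mul_comm, mul_assoc, mul_left_comm] using this
    have e1 : fderiv ℝ (fderiv ℝ u) (x₁, x₂) (0, 1) (1, 0) =
        k⁻¹ * (Real.cos d *
          (fderiv ℝ u (x₁, x₂) (1, 0) - fderiv ℝ φ₁ (x₁, x₂) (1, 0))) := by
      rw [← h21 x₁ x₂, hfun]; exact hder.deriv
    rw [hmix x₁ x₂, hu1 x₁ x₂] at e1
    have hD : deriv (fun s => φ₁ (s, x₂)) x₁ = fderiv ℝ φ₁ (x₁, x₂) (1, 0) :=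
      (partial1_hasDerivAt hφ₁ x₁ x₂).deriv
    rw [hD]
    have hc : Real.cos d ≠ 0 := (hcos x₁ x₂).ne'
    field_simp at e1
    rw [← hd] at e1
    have e2 : Real.cos d * (φ₂ (x₁, x₂) + k * Real.sin (u (x₁, x₂)) -
        fderiv ℝ φ₁ (x₁, x₂) (1, 0)) = Real.cos d * (k * Real.sin (u (x₁, x₂))) := by
      linear_combination -e1
    have e3 := mul_left_cancel₀ hc e2
    linarith
  -- Part 2
  have part2 : ∀ x₁ x₂ : ℝ, deriv (fun t => φ₂ (x₁, t)) x₂ = Real.sin (φ₁ (x₁, x₂)) := by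
    intro x₁ x₂
    set d := u (x₁, x₂) - φ₁ (x₁, x₂) with hd
    have hfun : (fun t => deriv (fun s => u (s, t)) x₁) =
        fun t => φ₂ (x₁, t) + k * Real.sin (u (x₁, t)) :=
      funext fun t => ha1 x₁ t
    have hu2 : fderiv ℝ u (x₁, x₂) (0, 1) = k⁻¹ * Real.sin d := by
      rw [← (partial2_hasDerivAt hud x₁ x₂).deriv]; exact ha2 x₁ x₂
    have hder : HasDerivAt (fun t => φ₂ (x₁, t) + k * Real.sin (u (x₁, t)))
        (fderiv ℝ φ₂ (x₁, x₂) (0, 1) +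
          k * (Real.cos (u (x₁, x₂)) * fderiv ℝ u (x₁, x₂) (0, 1))) x₂ := by
      have := (partial2_hasDerivAt hφ₂ x₁ x₂).add
        (((partial2_hasDerivAt hud x₁ x₂).sin).const_mul k)
      exact this
    have e1 : fderiv ℝ (fderiv ℝ u) (x₁, x₂) (0, 1) (1, 0) =
        fderiv ℝ φ₂ (x₁, x₂) (0, 1) +
          k * (Real.cos (u (x₁, x₂)) * fderiv ℝ u (x₁, x₂) (0, 1)) := by
      rw [← h12 x₁ x₂, hfun]; exact hder.deriv
    rw [hmix x₁ x₂, hu2] at e1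
    have hD : deriv (fun t => φ₂ (x₁, t)) x₂ = fderiv ℝ φ₂ (x₁, x₂) (0, 1) :=
      (partial2_hasDerivAt hφ₂ x₁ x₂).deriv
    have hsin : Real.sin (φ₁ (x₁, x₂)) =
        Real.sin (u (x₁, x₂)) * Real.cos d - Real.cos (u (x₁, x₂)) * Real.sin d := by
      rw [← Real.sin_sub, hd]; ring_nf
    rw [hD, hsin]
    field_simp at e1 ⊢
    linarith [e1]
  refine ⟨part1, part2, fun _ x₁ x₂ => ?_⟩
  have hfun : (fun t => deriv (fun s => φ₁ (s, t)) x₁) = fun t => φ₂ (x₁, t) :=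
    funext fun t => part1 x₁ t
  rw [hfun]; exact part2 x₁ x₂
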